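/- Let (Ω, μ) be a probability space and let ε : Ω → ℝⁿ be an exchangeable random vector. Let R ∈ ℝⁿ have nonincreasing coordinates (R₁ ≥ ⋯ ≥ R_n), let σ be a permutation of {1,…,n}, and write R^σ for the vector with (R^σ)_i = R_{σ(i)}. Let P : ℝⁿ → ℝⁿ be a map such that for every v ∈ ℝⁿ, P v ∈ K_n and ‖v − P v‖ ≤ ‖v − w‖ for all w ∈ K_n. Let 1 ≤ k ≤ n and let U₁, …, U_k : ℝ → ℝ be differentiable convex nondecreasing functions with U_i′(t) ≥ U_{i+1}′(t) for all t ∈ ℝ and i = 1,…,k−1; assume the integrands below are integrable. Then ∫ ∑_{i=1}^k U_i((P(R + ε ω)) i) dμ(ω) ≥ ∫ ∑_{i=1}^k U_i((P(R^σ + ε ω)) i) dμ(ω): in the Informed Case with quota k, reporting the true ranking maximizes the expected utility. -/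

import Mathlib

open MeasureTheory

noncomputable section

/-- The monotone (isotonic) cone of nonincreasing vectors in `ℝⁿ`. -/
def monoCone (n : ℕ) : Set (EuclideanSpace ℝ (Fin n)) :=
  {x | ∀ i j : Fin n, i ≤ j → x j ≤ x i}

/-- `p` is an isotonic projection of `y` onto the monotone cone. -/
def IsIsoProj {n : ℕ} (y p : EuclideanSpace ℝ (Fin n)) : Prop :=
  p ∈ monoCone n ∧ ∀ w ∈ monoCone n, ‖y - p‖ ≤ ‖y - w‖

/-- A random vector is exchangeable if its law is invariant under coordinate
permutations. -/
def Exchangeable {n : ℕ} {Ω : Type*} [MeasurableSpace Ω] (μ : Measure Ω)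
    (ε : Ω → EuclideanSpace ℝ (Fin n)) : Prop :=
  ∀ τ : Equiv.Perm (Fin n),
    Measure.map (fun ω => (WithLp.toLp 2 (fun i => ε ω (τ i)) : EuclideanSpace ℝ (Fin n))) μ =
      Measure.map ε μ

namespace IsoAux

open Finset

variable {n : ℕ}

/-- prefix sum of the first `m` coordinates -/
def pre (x : EuclideanSpace ℝ (Fin n)) (m : ℕ) : ℝ :=
  ∑ i ∈ Finset.univ.filter (fun i : Fin n => (i : ℕ) < m), x i

lemma pre_zero (x : EuclideanSpace ℝ (Fin n)) : pre x 0 = 0 := by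
  simp [pre]

lemma pre_succ (x : EuclideanSpace ℝ (Fin n)) {m : ℕ} (hm : m < n) :
    pre x (m + 1) = pre x m + x ⟨m, hm⟩ := by
  unfold pre
  have h : Finset.univ.filter (fun i : Fin n => (i : ℕ) < m + 1) =
      insert (⟨m, hm⟩ : Fin n) (Finset.univ.filter (fun i : Fin n => (i : ℕ) < m)) := by
    ext i
    simp only [Finset.mem_filter, Finset.mem_insert, Finset.mem_univ, true_and,
      Nat.lt_succ_iff_lt_or_eq, Fin.ext_iff]
    tauto
  rw [h, Finset.sum_insert (by simp)]
  ring

lemma pre_total (x : EuclideanSpace ℝ (Fin n)) : pre x n = ∑ i, x i := by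
  unfold pre
  rw [Finset.filter_true_of_mem (fun i _ => i.isLt)]

lemma pre_stable (x : EuclideanSpace ℝ (Fin n)) {m : ℕ} (h : n ≤ m) :
    pre x m = pre x n := by
  unfold pre
  congr 1
  ext i
  simp only [Finset.mem_filter, Finset.mem_univ, true_and]
  exact ⟨fun _ => i.isLt, fun _ => lt_of_lt_of_le i.isLt h⟩

lemma pre_indicator_sum (v : Fin n → ℝ) (m : ℕ) (c : ℝ) :
    ∑ i : Fin n, v i * (if (i : ℕ) < m then c else 0) =
      (∑ i ∈ Finset.univ.filter (fun i : Fin n => (i : ℕ) < m), v i) * c := by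
  rw [Finset.sum_mul, Finset.sum_filter]
  refine Finset.sum_congr rfl fun i _ => ?_
  split <;> ring

/-- Variational inequality from minimality: if `p + t • f` stays in the cone for small
positive `t`, then the direction `f` has nonpositive inner product with `x - p`. -/
lemma proj_dir (x p : EuclideanSpace ℝ (Fin n))
    (hmin : ∀ w ∈ monoCone n, ‖x - p‖ ≤ ‖x - w‖)
    (f : EuclideanSpace ℝ (Fin n)) (t₀ : ℝ) (ht₀ : 0 < t₀)
    (hf : ∀ t : ℝ, 0 < t → t ≤ t₀ → p + t • f ∈ monoCone n) :
    ∑ i, (x i - p i) * f i ≤ 0 := by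
  set c : ℝ := ∑ i, (x i - p i) * f i with hc
  set F : ℝ := ∑ i : Fin n, f i ^ 2 with hF
  have hFnn : 0 ≤ F := Finset.sum_nonneg fun i _ => sq_nonneg _
  have key : ∀ t : ℝ, 0 < t → t ≤ t₀ → 2 * t * c ≤ t ^ 2 * F := by
    intro t ht ht0
    have hw := hmin _ (hf t ht ht0)
    have e1 : ‖x - p‖ = Real.sqrt (∑ i : Fin n, (x i - p i) ^ 2) := by
      rw [EuclideanSpace.norm_eq]
      congr 1
      refine Finset.sum_congr rfl fun i _ => ?_
      rw [PiLp.sub_apply, Real.norm_eq_abs, sq_abs]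
    have e2 : ‖x - (p + t • f)‖ =
        Real.sqrt (∑ i : Fin n, (x i - p i - t * f i) ^ 2) := by
      rw [EuclideanSpace.norm_eq]
      congr 1
      refine Finset.sum_congr rfl fun i _ => ?_
      rw [PiLp.sub_apply, PiLp.add_apply, PiLp.smul_apply, Real.norm_eq_abs, sq_abs,
        smul_eq_mul]
      ring_nf
    have h1 : ∑ i : Fin n, (x i - p i) ^ 2 ≤ ∑ i : Fin n, (x i - p i - t * f i) ^ 2 := by
      by_contra hcon
      push_neg at hcon
      have : Real.sqrt (∑ i : Fin n, (x i - p i - t * f i) ^ 2) <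
          Real.sqrt (∑ i : Fin n, (x i - p i) ^ 2) :=
        Real.sqrt_lt_sqrt (Finset.sum_nonneg fun i _ => sq_nonneg _) hcon
      rw [← e1, ← e2] at this
      exact absurd hw (not_le.2 this)
    have h2 : ∑ i : Fin n, (x i - p i - t * f i) ^ 2 =
        ∑ i : Fin n, (x i - p i) ^ 2 - 2 * t * c + t ^ 2 * F := by
      rw [hc, hF, Finset.mul_sum, Finset.mul_sum, ← Finset.sum_sub_distrib,
        ← Finset.sum_add_distrib]
      refine Finset.sum_congr rfl fun i _ => ?_
      ring
    linarith
  by_contra hcpos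
  push_neg at hcpos
  set t : ℝ := min t₀ (c / (F + 1)) with htdef
  have htpos : 0 < t := lt_min ht₀ (div_pos hcpos (by linarith))
  have hkey := key t htpos (min_le_left _ _)
  have ht2 : t * (F + 1) ≤ c := by
    have := min_le_right t₀ (c / (F + 1))
    calc t * (F + 1) ≤ (c / (F + 1)) * (F + 1) := by
          apply mul_le_mul_of_nonneg_right this (by linarith)
      _ = c := by field_simp
  nlinarith [mul_pos htpos hcpos, sq_nonneg t, mul_le_mul_of_nonneg_left ht2 htpos.le]

end IsoAux

namespace IsoAux
variable {n : ℕ}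

lemma pre_le_proj (x p : EuclideanSpace ℝ (Fin n)) (hp : IsIsoProj x p) (m : ℕ) :
    pre x m ≤ pre p m := by
  obtain ⟨hmono, hmin⟩ := hp
  set f : EuclideanSpace ℝ (Fin n) := WithLp.toLp 2 (fun i : Fin n => if (i : ℕ) < m then (1 : ℝ) else 0) with hfdef
  have hdir := proj_dir x p hmin f 1 one_pos ?_
  · have hsum : ∑ i, (x i - p i) * f i = pre x m - pre p m := by
      have := pre_indicator_sum (fun i => x i - p i) m 1
      simp only [hfdef, PiLp.toLp_apply] at this ⊢
      rw [this, mul_one, Finset.sum_sub_distrib]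
      rfl
    linarith [hdir, hsum.symm.le]
  · intro t ht _ i j hij
    have hfi : ∀ a : Fin n, (p + t • f) a = p a + t * f a := fun a => by
      rw [PiLp.add_apply, PiLp.smul_apply, smul_eq_mul]
    rw [hfi i, hfi j]
    have hpij := hmono i j hij
    by_cases hj : (j : ℕ) < m
    · have hi : (i : ℕ) < m := lt_of_le_of_lt (by exact_mod_cast hij) hj
      simp only [hfdef, if_pos hi, if_pos hj, PiLp.toLp_apply]
      linarith
    · by_cases hi : (i : ℕ) < m
      · simp only [hfdef, if_pos hi, if_neg hj, PiLp.toLp_apply]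
        linarith
      · simp only [hfdef, if_neg hi, if_neg hj, PiLp.toLp_apply]
        linarith

lemma pre_proj_total (x p : EuclideanSpace ℝ (Fin n)) (hp : IsIsoProj x p) :
    pre p n = pre x n := by
  obtain ⟨hmono, hmin⟩ := hp
  have hones : ∀ (c : ℝ), ∑ i : Fin n, (x i - p i) * c ≤ 0 := by
    intro c
    set f : EuclideanSpace ℝ (Fin n) := WithLp.toLp 2 (fun _ : Fin n => c) with hfdef
    refine proj_dir x p hmin f 1 one_pos ?_
    intro t ht _ i j hij
    have hfi : ∀ a : Fin n, (p + t • f) a = p a + t * c := fun a => by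
      rw [PiLp.add_apply, PiLp.smul_apply, smul_eq_mul, hfdef, PiLp.toLp_apply]
    rw [hfi i, hfi j]
    linarith [hmono i j hij]
  have h1 := hones 1
  have h2 := hones (-1)
  have hsum : ∑ i : Fin n, (x i - p i) = 0 := by
    have e1 : ∑ i : Fin n, (x i - p i) * 1 = ∑ i : Fin n, (x i - p i) := by
      simp
    have e2 : ∑ i : Fin n, (x i - p i) * (-1) = -∑ i : Fin n, (x i - p i) := by
      rw [← Finset.sum_neg_distrib]
      exact Finset.sum_congr rfl fun i _ => by ring
    rw [e1] at h1
    rw [e2] at h2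
    linarith
  rw [pre_total, pre_total]
  rw [Finset.sum_sub_distrib] at hsum
  linarith

lemma proj_comp (x p : EuclideanSpace ℝ (Fin n)) (hp : IsIsoProj x p)
    {j : ℕ} (hj : j + 1 < n) (hlt : pre x (j + 1) < pre p (j + 1)) :
    p ⟨j + 1, hj⟩ = p ⟨j, Nat.lt_of_succ_lt hj⟩ := by
  obtain ⟨hmono, hmin⟩ := hp
  have hle : p ⟨j + 1, hj⟩ ≤ p ⟨j, Nat.lt_of_succ_lt hj⟩ :=
    hmono _ _ (by exact Fin.mk_le_mk.mpr (Nat.le_succ j))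
  rcases eq_or_lt_of_le hle with heq | hstrict
  · exact heq
  exfalso
  set t₀ : ℝ := p ⟨j, Nat.lt_of_succ_lt hj⟩ - p ⟨j + 1, hj⟩ with ht₀def
  have ht₀ : 0 < t₀ := sub_pos.2 hstrict
  set f : EuclideanSpace ℝ (Fin n) :=
    WithLp.toLp 2 (fun i : Fin n => if (i : ℕ) < j + 1 then (-1 : ℝ) else 0) with hfdef
  have hdir := proj_dir x p hmin f t₀ ht₀ ?_
  · have hsum : ∑ i, (x i - p i) * f i = -(pre x (j+1) - pre p (j+1)) := by
      have := pre_indicator_sum (fun i => x i - p i) (j+1) (-1)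
      simp only [hfdef, PiLp.toLp_apply] at this ⊢
      rw [this, Finset.sum_sub_distrib]
      show (pre x (j+1) - pre p (j+1)) * (-1) = _
      ring
    rw [hsum] at hdir
    linarith
  · intro t ht htle a b hab
    have hfi : ∀ a : Fin n, (p + t • f) a = p a + t * f a := fun a => by
      rw [PiLp.add_apply, PiLp.smul_apply, smul_eq_mul]
    rw [hfi a, hfi b]
    have hpab := hmono a b hab
    by_cases hb : (b : ℕ) < j + 1
    · have ha : (a : ℕ) < j + 1 := lt_of_le_of_lt (by exact_mod_cast hab) hb
      simp only [hfdef, if_pos ha, if_pos hb, PiLp.toLp_apply]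
      linarith
    · by_cases ha : (a : ℕ) < j + 1
      · simp only [hfdef, if_pos ha, if_neg hb, PiLp.toLp_apply]
        -- need: p b ≤ p a - t
        have h1 : p b ≤ p ⟨j + 1, hj⟩ := hmono _ _ (by
          simp only [Fin.le_def]
          omega)
        have h2 : p ⟨j, Nat.lt_of_succ_lt hj⟩ ≤ p a := hmono _ _ (by
          simp only [Fin.le_def]
          omega)
        have : p b ≤ p a - t₀ := by
          rw [ht₀def] at *
          linarith
        linarith
      · simp only [hfdef, if_neg ha, if_neg hb, PiLp.toLp_apply]
        linarith

/-- Key monotonicity lemma: prefix-sum dominance of the data transfers to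
prefix-sum dominance of the isotonic projections. -/
lemma pre_proj_mono {x xt p q : EuclideanSpace ℝ (Fin n)}
    (hp : IsIsoProj x p) (hq : IsIsoProj xt q)
    (hpre : ∀ m, pre x m ≤ pre xt m) (htot : pre x n = pre xt n) :
    ∀ m, pre p m ≤ pre q m := by
  have hDn : pre p n = pre q n := by
    rw [pre_proj_total x p hp, pre_proj_total xt q hq, htot]
  have main : ∀ m, m ≤ n → pre p m ≤ pre q m := by
    by_contra hcon
    push_neg at hcon
    obtain ⟨m₀, hm₀n, hm₀⟩ := hcon
    obtain ⟨jh, hjmem, hjmax⟩ := Finset.exists_max_image (Finset.range (n + 1))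
      (fun m => pre p m - pre q m) ⟨m₀, Finset.mem_range.2 (Nat.lt_succ_of_le hm₀n)⟩
    set M : ℝ := pre p jh - pre q jh with hMdef
    have hjn : jh ≤ n := Nat.lt_succ_iff.1 (Finset.mem_range.1 hjmem)
    have hMpos : 0 < M :=
      lt_of_lt_of_le (sub_pos.2 hm₀)
        (hjmax m₀ (Finset.mem_range.2 (Nat.lt_succ_of_le hm₀n)))
    have claim : ∀ i : ℕ, jh + i ≤ n → M ≤ pre p (jh + i) - pre q (jh + i) := by
      intro i
      induction i with
      | zero => intro _; simp [hMdef]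
      | succ i ih =>
        intro hle
        have hji : jh + i ≤ n := by omega
        have hDj := ih hji
        set j := jh + i with hjdef
        have hjltn : j < n := by omega
        have hjpos : 0 < j := by
          rcases Nat.eq_zero_or_pos j with h0 | h
          · rw [h0] at hDj
            rw [pre_zero, pre_zero] at hDj
            linarith
          · exact h
        obtain ⟨j', hj'⟩ : ∃ j', j = j' + 1 := ⟨j - 1, by omega⟩
        have hj'n : j' < n := by omega
        -- p at entry j' dominates q at entry j'
        have hstep : pre p j = pre p j' + p ⟨j', hj'n⟩ := by
          rw [hj']; exact pre_succ p hj'n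
        have hstepq : pre q j = pre q j' + q ⟨j', hj'n⟩ := by
          rw [hj']; exact pre_succ q hj'n
        have hDj' : pre p j' - pre q j' ≤ M :=
          hjmax j' (Finset.mem_range.2 (by omega))
        have hentry : q ⟨j', hj'n⟩ ≤ p ⟨j', hj'n⟩ := by linarith
        -- strict dominance at j, giving complementarity for p
        have hstrict : pre x j < pre p j := by
          have h1 : pre xt j ≤ pre q j := pre_le_proj xt q hq j
          have h2 := hpre j
          linarith
        have hcomp : p ⟨j' + 1, by omega⟩ = p ⟨j', Nat.lt_of_succ_lt (by omega)⟩ := by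
          apply proj_comp x p hp
          rw [← hj']
          exact hstrict
        have hqmono : q ⟨j' + 1, by omega⟩ ≤ q ⟨j', hj'n⟩ :=
          hq.1 _ _ (Fin.mk_le_mk.mpr (Nat.le_succ j'))
        have hentry2 : q ⟨j' + 1, by omega⟩ ≤ p ⟨j' + 1, by omega⟩ := by
          rw [hcomp]
          exact le_trans hqmono hentry
        have hj1n : j < n := hjltn
        have hstep2 : pre p (j + 1) = pre p j + p ⟨j, hj1n⟩ := pre_succ p hj1n
        have hstep2q : pre q (j + 1) = pre q j + q ⟨j, hj1n⟩ := pre_succ q hj1n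
        have : M ≤ pre p (j + 1) - pre q (j + 1) := by
          have hpq : q ⟨j, hj1n⟩ ≤ p ⟨j, hj1n⟩ := by
            have : (⟨j, hj1n⟩ : Fin n) = ⟨j' + 1, by omega⟩ := by
              simp [Fin.ext_iff, hj']
            rw [this]
            exact hentry2
          linarith
        have heq : jh + (i + 1) = j + 1 := by omega
        rw [heq]
        exact this
    have hfinal := claim (n - jh) (by omega)
    rw [show jh + (n - jh) = n by omega] at hfinal
    rw [hDn] at hfinal
    linarith
  intro m
  rcases le_or_gt m n with h | h
  · exact main m h
  · rw [pre_stable p h.le, pre_stable q h.le]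
    exact main n le_rfl


/-- Rearrangement: prefix sums of a permuted antitone vector are dominated by
the prefix sums of the vector itself. -/
lemma pre_perm_le (R : EuclideanSpace ℝ (Fin n))
    (hR : ∀ i j : Fin n, i ≤ j → R j ≤ R i) (σ : Equiv.Perm (Fin n)) (m : ℕ) :
    pre (WithLp.toLp 2 (fun j => R (σ j)) : EuclideanSpace ℝ (Fin n)) m ≤ pre R m := by
  set g : Fin n → ℝ := fun i => if (i : ℕ) < m then 1 else 0 with hgdef
  have hmono : Monovary R g := by
    intro i j hij
    by_cases hi : (i : ℕ) < m
    · by_cases hj : (j : ℕ) < m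
      · simp [hgdef, hi, hj] at hij
      · simp only [hgdef, if_pos hi, if_neg hj] at hij
        exact absurd hij (by norm_num)
    · by_cases hj : (j : ℕ) < m
      · exact hR j i (Fin.le_def.mpr (by omega))
      · simp [hgdef, hi, hj] at hij
  have hre := hmono.sum_comp_perm_mul_le_sum_mul (σ := σ)
  have e1 : ∀ v : Fin n → ℝ,
      ∑ i : Fin n, v i * g i =
        ∑ i ∈ Finset.univ.filter (fun i : Fin n => (i : ℕ) < m), v i := by
    intro v
    rw [Finset.sum_filter]
    refine Finset.sum_congr rfl fun i _ => ?_
    by_cases hi : (i : ℕ) < m <;> simp [hgdef, hi]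
  calc pre (WithLp.toLp 2 (fun j => R (σ j)) : EuclideanSpace ℝ (Fin n)) m
      = ∑ i : Fin n, R (σ i) * g i := (e1 fun i => R (σ i)).symm
    _ ≤ ∑ i : Fin n, R i * g i := hre
    _ = pre R m := e1 R

lemma pre_perm_total (R : EuclideanSpace ℝ (Fin n)) (σ : Equiv.Perm (Fin n)) :
    pre (WithLp.toLp 2 (fun j => R (σ j)) : EuclideanSpace ℝ (Fin n)) n = pre R n := by
  rw [pre_total, pre_total]
  exact Equiv.sum_comp σ R.ofLp

/-- Tangent-line bound for differentiable convex functions. -/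
lemma tangent_le {f : ℝ → ℝ} (hc : ConvexOn ℝ Set.univ f) (hd : Differentiable ℝ f)
    (x y : ℝ) : deriv f x * (y - x) ≤ f y - f x := by
  rcases lt_trichotomy x y with hxy | hxy | hxy
  · have h := hc.deriv_le_slope (Set.mem_univ x) (Set.mem_univ y) hxy (hd x)
    rw [slope_def_field] at h
    have := (le_div_iff₀ (sub_pos.2 hxy)).1 h
    linarith
  · subst hxy; simp
  · have h := hc.slope_le_deriv (Set.mem_univ y) (Set.mem_univ x) hxy (hd x)
    rw [slope_def_field] at h
    have := (div_le_iff₀ (sub_pos.2 hxy)).1 h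
    nlinarith

lemma deriv_nonneg_of_monotone {f : ℝ → ℝ} (hc : ConvexOn ℝ Set.univ f)
    (hm : Monotone f) (hd : Differentiable ℝ f) (x : ℝ) : 0 ≤ deriv f x := by
  have h := hc.slope_le_deriv (Set.mem_univ (x - 1)) (Set.mem_univ x)
    (by linarith) (hd x)
  rw [slope_def_field] at h
  have h2 : (0 : ℝ) ≤ (f x - f (x - 1)) / (x - (x - 1)) := by
    apply div_nonneg
    · have := hm (show x - 1 ≤ x by linarith)
      linarith
    · linarith
  linarith

/-- Abel-type positivity: a sum `∑ aᵢ dᵢ` is nonnegative when `a` is antitone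
nonnegative and all prefix sums of `d` are nonnegative. -/
lemma abel_nonneg : ∀ (k : ℕ) (a d : ℕ → ℝ),
    (∀ i j, i ≤ j → j < k → a j ≤ a i) →
    (∀ i, i < k → 0 ≤ a i) →
    (∀ m, m ≤ k → 0 ≤ ∑ i ∈ Finset.range m, d i) →
    0 ≤ ∑ i ∈ Finset.range k, a i * d i := by
  intro k
  induction k with
  | zero => intro a d _ _ _; simp
  | succ k ih =>
    intro a d ha ha0 hD
    have h1 : 0 ≤ ∑ i ∈ Finset.range k, (a i - a k) * d i := by
      refine ih (fun i => a i - a k) d ?_ ?_ ?_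
      · intro i j hij hj
        have := ha i j hij (by omega)
        show a j - a k ≤ a i - a k
        linarith
      · intro i hi
        have := ha i k (by omega) (by omega)
        show 0 ≤ a i - a k
        linarith
      · intro m hm
        exact hD m (by omega)
    have h2 : 0 ≤ a k * ∑ i ∈ Finset.range (k + 1), d i :=
      mul_nonneg (ha0 k (by omega)) (hD (k + 1) le_rfl)
    have h3 : ∑ i ∈ Finset.range k, (a i - a k) * d i =
        (∑ i ∈ Finset.range k, a i * d i) - ∑ i ∈ Finset.range k, a k * d i := by
      rw [← Finset.sum_sub_distrib]
      exact Finset.sum_congr rfl fun i _ => by ring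
    have h4 : a k * ∑ i ∈ Finset.range (k + 1), d i =
        (∑ i ∈ Finset.range k, a k * d i) + a k * d k := by
      rw [Finset.sum_range_succ, mul_add, Finset.mul_sum]
    rw [Finset.sum_range_succ]
    rw [h3] at h1
    rw [h4] at h2
    linarith


/-- The deterministic core: prefix-sum dominance of the data implies the
rank-weighted utility comparison of the isotonic projections. -/
lemma pointwise {n k : ℕ} (hkn : k ≤ n)
    {x xt p q : EuclideanSpace ℝ (Fin n)}
    (hp : IsIsoProj x p) (hq : IsIsoProj xt q)
    (hpre : ∀ m, pre x m ≤ pre xt m) (htot : pre x n = pre xt n)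
    (U : Fin k → ℝ → ℝ)
    (hUc : ∀ i, ConvexOn ℝ Set.univ (U i))
    (hUm : ∀ i, Monotone (U i))
    (hUd : ∀ i, Differentiable ℝ (U i))
    (hU' : ∀ (i : Fin k) (h : (i : ℕ) + 1 < k) (t : ℝ),
      deriv (U ⟨(i : ℕ) + 1, h⟩) t ≤ deriv (U i) t) :
    ∑ i : Fin k, U i (p (Fin.castLE hkn i)) ≤ ∑ i : Fin k, U i (q (Fin.castLE hkn i)) := by
  have hproj := pre_proj_mono hp hq hpre htot
  set a : ℕ → ℝ :=
    fun i => if h : i < k then deriv (U ⟨i, h⟩) (p (Fin.castLE hkn ⟨i, h⟩)) else 0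
    with ha_def
  set d : ℕ → ℝ := fun i => if h : i < n then q ⟨i, h⟩ - p ⟨i, h⟩ else 0 with hd_def
  have hDm : ∀ m, m ≤ n → ∑ i ∈ Finset.range m, d i = pre q m - pre p m := by
    intro m
    induction m with
    | zero => intro _; simp [pre_zero]
    | succ m ih =>
      intro hm
      have hmn : m < n := by omega
      rw [Finset.sum_range_succ, ih (by omega), pre_succ q hmn, pre_succ p hmn,
        hd_def]
      beta_reduce
      rw [dif_pos hmn]
      ring
  have hadj : ∀ j, j + 1 < k → a (j + 1) ≤ a j := by
    intro j hj
    have hjk : j < k := by omega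
    have hj1k : j + 1 < k := hj
    rw [ha_def]
    beta_reduce
    rw [dif_pos hj1k, dif_pos hjk]
    have hple : p (Fin.castLE hkn ⟨j + 1, hj1k⟩) ≤ p (Fin.castLE hkn ⟨j, hjk⟩) :=
      hp.1 _ _ (by simp [Fin.le_def])
    have step1 : deriv (U ⟨j + 1, hj1k⟩) (p (Fin.castLE hkn ⟨j + 1, hj1k⟩)) ≤
        deriv (U ⟨j + 1, hj1k⟩) (p (Fin.castLE hkn ⟨j, hjk⟩)) :=
      (hUc _).monotoneOn_deriv (fun t _ => (hUd _) t) (Set.mem_univ _)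
        (Set.mem_univ _) hple
    have step2 : deriv (U ⟨j + 1, hj1k⟩) (p (Fin.castLE hkn ⟨j, hjk⟩)) ≤
        deriv (U ⟨j, hjk⟩) (p (Fin.castLE hkn ⟨j, hjk⟩)) :=
      hU' ⟨j, hjk⟩ hj1k _
    exact le_trans step1 step2
  have ha : ∀ i j, i ≤ j → j < k → a j ≤ a i := by
    intro i j hij
    induction j, hij using Nat.le_induction with
    | base => intro _; exact le_rfl
    | succ j hij ih => intro hjk; exact le_trans (hadj j hjk) (ih (by omega))
  have ha0 : ∀ i, i < k → 0 ≤ a i := by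
    intro i hi
    rw [ha_def]
    beta_reduce
    rw [dif_pos hi]
    exact deriv_nonneg_of_monotone (hUc _) (hUm _) (hUd _) _
  have hD : ∀ m, m ≤ k → 0 ≤ ∑ i ∈ Finset.range m, d i := by
    intro m hm
    rw [hDm m (le_trans hm hkn)]
    linarith [hproj m]
  have habel := abel_nonneg k a d ha ha0 hD
  have hsum : ∑ i ∈ Finset.range k, a i * d i =
      ∑ i : Fin k, deriv (U i) (p (Fin.castLE hkn i)) *
        (q (Fin.castLE hkn i) - p (Fin.castLE hkn i)) := by
    rw [← Fin.sum_univ_eq_sum_range (fun i => a i * d i) k]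
    refine Finset.sum_congr rfl fun i _ => ?_
    have h1 : (i : ℕ) < k := i.isLt
    have h2 : (i : ℕ) < n := lt_of_lt_of_le h1 hkn
    have e1 : (⟨(i : ℕ), h1⟩ : Fin k) = i := by ext; simp
    have e2 : (⟨(i : ℕ), h2⟩ : Fin n) = Fin.castLE hkn i := by ext; simp
    rw [ha_def, hd_def]
    beta_reduce
    rw [dif_pos h1, dif_pos h2, e1, e2]
  have htan : ∑ i : Fin k, deriv (U i) (p (Fin.castLE hkn i)) *
        (q (Fin.castLE hkn i) - p (Fin.castLE hkn i)) ≤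
      ∑ i : Fin k, (U i (q (Fin.castLE hkn i)) - U i (p (Fin.castLE hkn i))) :=
    Finset.sum_le_sum fun i _ => tangent_le (hUc i) (hUd i) _ _
  rw [hsum] at habel
  have := le_trans habel htan
  rw [Finset.sum_sub_distrib] at this
  linarith

end IsoAux

/-- In the Informed Case with quota `k` and rank-dependent utilities
`U₁, …, U_k` (differentiable, convex, nondecreasing, with `U_i' ≥ U_{i+1}'`),
reporting the true ranking maximizes the expected utility. -/
theorem informed_case_quota_k_truthfulness
    {n k : ℕ} (hk1 : 1 ≤ k) (hkn : k ≤ n) {Ω : Type*} [MeasurableSpace Ω]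
    (μ : Measure Ω) [IsProbabilityMeasure μ]
    (ε : Ω → EuclideanSpace ℝ (Fin n)) (hε : Exchangeable μ ε)
    (R : EuclideanSpace ℝ (Fin n)) (hR : ∀ i j : Fin n, i ≤ j → R j ≤ R i)
    (σ : Equiv.Perm (Fin n))
    (P : EuclideanSpace ℝ (Fin n) → EuclideanSpace ℝ (Fin n))
    (hP : ∀ v, IsIsoProj v (P v))
    (U : Fin k → ℝ → ℝ)
    (hUc : ∀ i, ConvexOn ℝ Set.univ (U i))
    (hUm : ∀ i, Monotone (U i))
    (hUd : ∀ i, Differentiable ℝ (U i))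
    (hU' : ∀ (i : Fin k) (h : (i : ℕ) + 1 < k) (t : ℝ),
      deriv (U ⟨(i : ℕ) + 1, h⟩) t ≤ deriv (U i) t)
    (hint_true : Integrable (fun ω =>
      ∑ i : Fin k, U i (P (R + ε ω) (Fin.castLE hkn i))) μ)
    (hint_perm : Integrable (fun ω =>
      ∑ i : Fin k,
        U i (P (WithLp.toLp 2 (fun j => R (σ j) + ε ω j) : EuclideanSpace ℝ (Fin n))
          (Fin.castLE hkn i))) μ) :
    ∫ ω, ∑ i : Fin k,
        U i (P (WithLp.toLp 2 (fun j => R (σ j) + ε ω j) : EuclideanSpace ℝ (Fin n))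
          (Fin.castLE hkn i)) ∂μ ≤
      ∫ ω, ∑ i : Fin k, U i (P (R + ε ω) (Fin.castLE hkn i)) ∂μ := by
  apply integral_mono hint_perm hint_true
  intro ω
  dsimp only
  set x : EuclideanSpace ℝ (Fin n) := WithLp.toLp 2 (fun j => R (σ j) + ε ω j) with hxdef
  set xt : EuclideanSpace ℝ (Fin n) := R + ε ω with hxtdef
  have hx : ∀ m, IsoAux.pre x m =
      IsoAux.pre (WithLp.toLp 2 (fun j => R (σ j)) : EuclideanSpace ℝ (Fin n)) m
        + IsoAux.pre (ε ω) m := by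
    intro m
    unfold IsoAux.pre
    rw [← Finset.sum_add_distrib]
  have hxt : ∀ m, IsoAux.pre xt m = IsoAux.pre R m + IsoAux.pre (ε ω) m := by
    intro m
    unfold IsoAux.pre
    rw [← Finset.sum_add_distrib]
    exact Finset.sum_congr rfl fun i _ => rfl
  refine IsoAux.pointwise hkn (hP x) (hP xt) ?_ ?_ U hUc hUm hUd hU'
  · intro m
    rw [hx m, hxt m]
    have := IsoAux.pre_perm_le R hR σ m
    linarith
  · rw [hx n, hxt n]
    have := IsoAux.pre_perm_total R σ
    linarith
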